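/- arXiv:1401.5339 — 2 statements merged into one kernel-verified Lean document; each statement's English description precedes it below -/
import Mathlib

section
/- If W is row-stochastic and A is diagonal with entries in [0,1), then the limit matrix V = (I − AW)^{-1}(I − A) is row-stochastic: it is entrywise nonnegative and V·1 = 1. -/
open Matrix

attribute [local instance] Matrix.linftyOpNormedRing

theorem limit_rowStochastic {n : ℕ} (W : Matrix (Fin n) (Fin n) ℝ)
    (hW0 : ∀ i j, 0 ≤ W i j) (hW1 : W.mulVec 1 = 1)
    (a : Fin n → ℝ) (ha : ∀ i, a i ∈ Set.Ico (0:ℝ) 1)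
    (A : Matrix (Fin n) (Fin n) ℝ) (hA : A = Matrix.diagonal a) :
    (∀ i j, 0 ≤ ((1 - A * W)⁻¹ * (1 - A)) i j) ∧
      ((1 - A * W)⁻¹ * (1 - A)).mulVec 1 = 1 := by
  subst hA
  haveI : @CompleteSpace (Matrix (Fin n) (Fin n) ℝ) (PseudoMetricSpace.toUniformSpace) :=
    (by infer_instance : CompleteSpace (Fin n → Fin n → ℝ))
  set M := Matrix.diagonal a * W with hMdef
  have hrow : ∀ i, ∑ j, W i j = 1 := by
    intro i
    have := congrFun hW1 i
    simpa [Matrix.mulVec, dotProduct] using this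
  have hM0 : ∀ i j, 0 ≤ M i j := by
    intro i j
    rw [hMdef, Matrix.diagonal_mul]
    exact mul_nonneg (ha i).1 (hW0 i j)
  have hnorm : ‖M‖ < 1 := by
    have h1 : ‖M‖₊ < 1 := by
      rw [Matrix.linfty_opNNNorm_def]
      rw [Finset.sup_lt_iff (by norm_num : (0 : NNReal) < 1)]
      intro i _
      have key : ∑ j, ‖M i j‖ = a i := by
        rw [Finset.sum_congr rfl (fun j _ => by
          rw [Real.norm_eq_abs, abs_of_nonneg (hM0 i j), hMdef, Matrix.diagonal_mul]),
          ← Finset.mul_sum, hrow, mul_one]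
      have h2 : ((∑ j, ‖M i j‖₊ : NNReal) : ℝ) < 1 := by
        push_cast
        rw [key]; exact (ha i).2
      exact_mod_cast h2
    exact_mod_cast h1
  -- inverse equals geometric series
  have hunit : IsUnit (1 - M) := isUnit_one_sub_of_norm_lt_one hnorm
  have hinv : (1 - M)⁻¹ = ∑' k : ℕ, M ^ k := by
    rw [Matrix.nonsing_inv_eq_ringInverse, ← geom_series_eq_inverse M hnorm]
    rfl
  have hS : HasSum (fun k : ℕ => M ^ k) ((1 - M)⁻¹) := by
    rw [hinv]; exact (summable_geometric_of_norm_lt_one hnorm).hasSum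
  -- entry evaluation is continuous
  have hentry : ∀ (i j : Fin n), Continuous (fun P : Matrix (Fin n) (Fin n) ℝ => P i j) := by
    intro i j
    have hlip : LipschitzWith 1 (fun P : Matrix (Fin n) (Fin n) ℝ => P i j) := by
      intro P Q
      simp only [ENNReal.coe_one, one_mul, edist_dist, dist_eq_norm]
      refine ENNReal.ofReal_le_ofReal ?_
      have h3 : ‖(P - Q) i j‖₊ ≤ ‖P - Q‖₊ := by
        rw [Matrix.linfty_opNNNorm_def]
        exact le_trans (Finset.single_le_sum (f := fun k => ‖(P - Q) i k‖₊)
          (fun k _ => zero_le) (Finset.mem_univ j)) (Finset.le_sup (f := fun i => ∑ j, ‖(P - Q) i j‖₊) (Finset.mem_univ i))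
      calc ‖P i j - Q i j‖ = ‖(P - Q) i j‖ := by simp [Matrix.sub_apply]
        _ ≤ ‖P - Q‖ := h3
    exact hlip.continuous
  -- inverse is entrywise nonneg
  have hpow0 : ∀ (k : ℕ) i j, 0 ≤ (M ^ k) i j := by
    intro k
    induction k with
    | zero => intro i j; simp [Matrix.one_apply]; positivity
    | succ m ih =>
      intro i j
      rw [pow_succ, Matrix.mul_apply]
      exact Finset.sum_nonneg fun l _ => mul_nonneg (ih i l) (hM0 l j)
  have hinv0 : ∀ i j, 0 ≤ (1 - M)⁻¹ i j := by
    intro i j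
    have hSij : HasSum (fun k : ℕ => (M ^ k) i j) ((1 - M)⁻¹ i j) :=
      hS.map ((AddMonoidHom.mk' (fun P : Matrix (Fin n) (Fin n) ℝ => P i j) (fun P Q => rfl)) : Matrix (Fin n) (Fin n) ℝ →+ ℝ) (by exact hentry i j)
    exact hSij.nonneg fun k => hpow0 k i j
  constructor
  · intro i j
    rw [Matrix.mul_apply]
    refine Finset.sum_nonneg fun l _ => mul_nonneg (hinv0 i l) ?_
    rcases eq_or_ne l j with rfl | h
    · simp [Matrix.one_apply, Matrix.diagonal_apply_eq]
      linarith [(ha l).2]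
    · simp [Matrix.sub_apply, Matrix.one_apply_ne h, Matrix.diagonal_apply_ne _ h]
  · have hkey : (1 - Matrix.diagonal a).mulVec 1 = (1 - M).mulVec 1 := by
      rw [Matrix.sub_mulVec, Matrix.sub_mulVec, hMdef, ← Matrix.mulVec_mulVec, hW1]
    rw [← Matrix.mulVec_mulVec, hkey, Matrix.mulVec_mulVec,
      Matrix.nonsing_inv_mul _ ((Matrix.isUnit_iff_isUnit_det _).mp hunit), Matrix.one_mulVec]
end

section
/- Convex hull invariance of the limit: if W is row-stochastic, A diagonal with a_ii ∈ [0,1), and X(∞) = (I − AW)^{-1}(I − A)X(0), then each row of X(∞) lies in the convex hull of the rows of X(0). -/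
attribute [local instance] Matrix.linftyOpNormedRing Matrix.linftyOpNormedAlgebra

theorem limit_rows_in_convexHull {n m : ℕ} (W : Matrix (Fin n) (Fin n) ℝ)
    (hW0 : ∀ i j, 0 ≤ W i j) (hW1 : W.mulVec 1 = 1)
    (a : Fin n → ℝ) (ha : ∀ i, a i ∈ Set.Ico (0:ℝ) 1)
    (A : Matrix (Fin n) (Fin n) ℝ) (hA : A = Matrix.diagonal a)
    (X0 Xinf : Matrix (Fin n) (Fin m) ℝ)
    (hX : Xinf = (1 - A * W)⁻¹ * (1 - A) * X0) :
    ∀ i, Xinf i ∈ convexHull ℝ (Set.range fun j => X0 j) := by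
  subst hA; subst hX
  rcases Nat.eq_zero_or_pos n with hn | hn
  · subst hn; exact fun i => i.elim0
  haveI : Nonempty (Fin n) := ⟨⟨0, hn⟩⟩
  haveI : CompleteSpace (Matrix (Fin n) (Fin n) ℝ) := FiniteDimensional.complete ℝ _
  set T : Matrix (Fin n) (Fin n) ℝ := Matrix.diagonal a * W with hT
  have hTentry : ∀ i j, T i j = a i * W i j := fun i j => Matrix.diagonal_mul a W i j
  have hT0 : ∀ i j, 0 ≤ T i j := fun i j => by
    rw [hTentry]; exact mul_nonneg (ha i).1 (hW0 i j)
  have hrow : ∀ i, ∑ j, W i j = 1 := by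
    intro i
    have := congrFun hW1 i
    simpa [Matrix.mulVec, dotProduct] using this
  have hTnorm : ‖T‖ < 1 := by
    rw [Matrix.linfty_opNorm_def]
    have hlt : ∀ i, (∑ j, ‖T i j‖₊ : NNReal) < 1 := by
      intro i
      have hsum : ((∑ j, ‖T i j‖₊ : NNReal) : ℝ) = a i := by
        push_cast
        calc (∑ j, (‖T i j‖₊ : ℝ)) = ∑ j, a i * W i j := by
              refine Finset.sum_congr rfl fun j _ => ?_
              rw [coe_nnnorm, Real.norm_eq_abs, hTentry,
                abs_of_nonneg (mul_nonneg (ha i).1 (hW0 i j))]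
          _ = a i := by rw [← Finset.mul_sum, hrow i, mul_one]
      have : ((∑ j, ‖T i j‖₊ : NNReal) : ℝ) < 1 := by rw [hsum]; exact (ha i).2
      exact_mod_cast this
    have : ((Finset.univ : Finset (Fin n)).sup fun i => ∑ j, ‖T i j‖₊) < 1 :=
      (Finset.sup_lt_iff (by norm_num : (⊥ : NNReal) < 1)).2 fun i _ => hlt i
    exact_mod_cast this
  have hunit : IsUnit (1 - T) := isUnit_one_sub_of_norm_lt_one hTnorm
  have hdet : IsUnit (1 - T).det := (Matrix.isUnit_iff_isUnit_det _).mp hunit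
  have hsumS : HasSum (fun k => T ^ k) ((1 - T)⁻¹) := by
    rw [Matrix.nonsing_inv_eq_ringInverse]
    exact hasSum_geom_series_inverse T hTnorm
  have hTpow : ∀ k i j, 0 ≤ (T ^ k) i j := by
    intro k
    induction k with
    | zero => intro i j; simp only [pow_zero, Matrix.one_apply]; positivity
    | succ k ih =>
        intro i j
        rw [pow_succ, Matrix.mul_apply]
        exact Finset.sum_nonneg fun l _ => mul_nonneg (ih i l) (hT0 l j)
  have hentry : ∀ i j, 0 ≤ (1 - T)⁻¹ i j := by
    intro i j
    let e : Matrix (Fin n) (Fin n) ℝ →ₗ[ℝ] ℝ :=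
      { toFun := fun M => M i j, map_add' := fun _ _ => rfl, map_smul' := fun _ _ => rfl }
    have hc : Continuous e := e.continuous_of_finiteDimensional
    have h2 : HasSum (fun k => (T ^ k) i j) ((1 - T)⁻¹ i j) :=
      hsumS.map e.toAddMonoidHom hc
    rw [← h2.tsum_eq]
    exact tsum_nonneg fun k => hTpow k i j
  set V : Matrix (Fin n) (Fin n) ℝ := (1 - T)⁻¹ * (1 - Matrix.diagonal a) with hV
  have hdiag : (1 : Matrix (Fin n) (Fin n) ℝ) - Matrix.diagonal a
      = Matrix.diagonal (fun i => 1 - a i) := by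
    rw [← Matrix.diagonal_one, Matrix.diagonal_sub]
  have hV0 : ∀ i j, 0 ≤ V i j := by
    intro i j
    rw [hV, hdiag, Matrix.mul_diagonal]
    exact mul_nonneg (hentry i j) (by linarith [(ha j).2])
  have hkey : V.mulVec 1 = 1 := by
    have h1 : (1 - Matrix.diagonal a).mulVec (1 : Fin n → ℝ) = (1 - T).mulVec 1 := by
      funext i
      simp only [Matrix.mulVec, dotProduct, Matrix.sub_apply, Matrix.one_apply,
        Pi.one_apply, mul_one, Matrix.diagonal_apply, hTentry]
      rw [Finset.sum_sub_distrib, Finset.sum_sub_distrib, ← Finset.mul_sum, hrow i, mul_one]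
      simp
    rw [hV, ← Matrix.mulVec_mulVec, h1, Matrix.mulVec_mulVec,
      Matrix.nonsing_inv_mul _ hdet, Matrix.one_mulVec]
  have hsum1 : ∀ i, ∑ j, V i j = 1 := by
    intro i
    have := congrFun hkey i
    simpa [Matrix.mulVec, dotProduct] using this
  intro i
  have hXrow : (V * X0) i = ∑ j, V i j • X0 j := by
    funext l
    rw [Finset.sum_apply]
    simp only [Pi.smul_apply, smul_eq_mul]
    rw [Matrix.mul_apply]
  rw [hXrow]
  have hmem := Finset.centerMass_mem_convexHull (Finset.univ : Finset (Fin n))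
    (fun j _ => hV0 i j) (by rw [hsum1 i]; norm_num)
    (fun j _ => Set.mem_range_self (f := fun j => X0 j) j)
  rwa [Finset.centerMass_eq_of_sum_1 _ (fun j => X0 j) (hsum1 i)] at hmem
end
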